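/- Let a, b₁, b₂, c ∈ ℤ with a ≥ 1, f = a x₁x₂ + b₁x₁ + b₂x₂ + c, d₁⁺ = max(1, ⌈(1−b₂)/a⌉), d₂⁺ = max(1, ⌈(1−b₁)/a⌉). Then the set of minimal elements of D_{≥0}(f) = { d ∈ ℕ₊² : a d₂ + b₁ ≥ 1, a d₁ + b₂ ≥ 1, f(d) ≥ 0 } equals the set of minimal elements of { (d, max(d₂⁺, ⌈−(c + b₁d)/(ad + b₂)⌉)) : d ∈ ℕ₊, d₁⁺ ≤ d ≤ max(d₁⁺, ⌈−(c + b₂d₂⁺)/(a d₂⁺ + b₁)⌉) }. -/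
import Mathlib

private lemma ceil_le_iff' (n m k : ℤ) (hm : 0 < m) :
    ⌈(n : ℚ) / (m : ℚ)⌉ ≤ k ↔ n ≤ m * k := by
  rw [Int.ceil_le, div_le_iff₀ (by exact_mod_cast hm)]
  rw [show ((k : ℚ) * m) = ((k * m : ℤ) : ℚ) by push_cast; ring, Int.cast_le]
  constructor <;> intro h <;> nlinarith

private def gfun (a b₁ b₂ c d₂p x : ℤ) : ℤ :=
  max d₂p ⌈(-(((c : ℚ) + (b₁ : ℚ) * (x : ℚ)))) / ((a : ℚ) * (x : ℚ) + (b₂ : ℚ))⌉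

private lemma gfun_le (a b₁ b₂ c d₂p x y : ℤ) (hx : 1 ≤ a * x + b₂) :
    gfun a b₁ b₂ c d₂p x ≤ y ↔ d₂p ≤ y ∧ 0 ≤ a * x * y + b₁ * x + b₂ * y + c := by
  unfold gfun
  rw [max_le_iff]
  rw [show (-(((c : ℚ) + (b₁ : ℚ) * (x : ℚ)))) = ((-(c + b₁ * x) : ℤ) : ℚ) by push_cast; ring]
  rw [show ((a : ℚ) * (x : ℚ) + (b₂ : ℚ)) = ((a * x + b₂ : ℤ) : ℚ) by push_cast; ring]
  rw [ceil_le_iff' _ _ _ (by omega)]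
  constructor <;> rintro ⟨h1, h2⟩ <;> exact ⟨h1, by nlinarith⟩

/-- description of the minimal elements of `D_{≥0}(f)` for a
dominated polynomial `f = a x₁x₂ + b₁x₁ + b₂x₂ + c` in two variables. -/
theorem stmt_19 (a b₁ b₂ c : ℤ) (ha : 1 ≤ a)
    (d₁p d₂p : ℤ)
    (hd₁p : d₁p = max 1 ⌈(((1 - b₂ : ℤ) : ℚ)) / (a : ℚ)⌉)
    (hd₂p : d₂p = max 1 ⌈(((1 - b₁ : ℤ) : ℚ)) / (a : ℚ)⌉)
    (Dset Cset : Set (ℤ × ℤ))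
    (hD : Dset = {p : ℤ × ℤ | 0 < p.1 ∧ 0 < p.2 ∧ 1 ≤ a * p.2 + b₁ ∧
      1 ≤ a * p.1 + b₂ ∧ 0 ≤ a * p.1 * p.2 + b₁ * p.1 + b₂ * p.2 + c})
    (hC : Cset = {p : ℤ × ℤ | ∃ d : ℤ, 0 < d ∧ d₁p ≤ d ∧
      d ≤ max d₁p ⌈(-(((c : ℚ) + (b₂ : ℚ) * (d₂p : ℚ)))) / ((a : ℚ) * (d₂p : ℚ) + (b₁ : ℚ))⌉ ∧
      p = (d, max d₂p ⌈(-(((c : ℚ) + (b₁ : ℚ) * (d : ℚ)))) / ((a : ℚ) * (d : ℚ) + (b₂ : ℚ))⌉)}) :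
    {p ∈ Dset | ∀ q ∈ Dset, q ≤ p → q = p} =
    {p ∈ Cset | ∀ q ∈ Cset, q ≤ p → q = p} := by
  -- characterizations of d₁p, d₂p
  have hAx : ∀ x : ℤ, d₁p ≤ x ↔ 0 < x ∧ 1 ≤ a * x + b₂ := by
    intro x
    rw [hd₁p, max_le_iff, ceil_le_iff' _ _ _ (by omega)]
    constructor
    · rintro ⟨h1, h2⟩; exact ⟨by omega, by linarith⟩
    · rintro ⟨h1, h2⟩; exact ⟨by omega, by linarith⟩
  have hAy : ∀ y : ℤ, d₂p ≤ y ↔ 0 < y ∧ 1 ≤ a * y + b₁ := by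
    intro y
    rw [hd₂p, max_le_iff, ceil_le_iff' _ _ _ (by omega)]
    constructor
    · rintro ⟨h1, h2⟩; exact ⟨by omega, by linarith⟩
    · rintro ⟨h1, h2⟩; exact ⟨by omega, by linarith⟩
  obtain ⟨hd₂pos, hb₂pos⟩ := (hAy d₂p).mp le_rfl
  set M : ℤ := gfun a b₂ b₁ c d₁p d₂p with hM
  have hg : ∀ x y : ℤ, d₁p ≤ x →
      (gfun a b₁ b₂ c d₂p x ≤ y ↔ (0 < y ∧ 1 ≤ a * y + b₁ ∧
        0 ≤ a * x * y + b₁ * x + b₂ * y + c)) := by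
    intro x y hx
    rw [gfun_le _ _ _ _ _ _ _ ((hAx x).mp hx).2, hAy y]
    tauto
  have hD' : ∀ x y : ℤ, (x, y) ∈ Dset ↔ (d₁p ≤ x ∧ gfun a b₁ b₂ c d₂p x ≤ y) := by
    intro x y
    rw [hD]; simp only [Set.mem_setOf_eq]
    constructor
    · rintro ⟨h1, h2, h3, h4, h5⟩
      have hx : d₁p ≤ x := (hAx x).mpr ⟨h1, h4⟩
      exact ⟨hx, (hg x y hx).mpr ⟨h2, h3, h5⟩⟩
    · rintro ⟨hx, hy⟩
      have h1 := (hAx x).mp hx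
      have h2 := (hg x y hx).mp hy
      exact ⟨h1.1, h2.1, h2.2.1, h1.2, h2.2.2⟩
  have hmono : ∀ x x' : ℤ, d₁p ≤ x → x ≤ x' →
      gfun a b₁ b₂ c d₂p x' ≤ gfun a b₁ b₂ c d₂p x := by
    intro x x' hx hxx'
    obtain ⟨h1, h2, h3⟩ := (hg x _ hx).mp le_rfl
    refine (hg x' _ (hx.trans hxx')).mpr ⟨h1, h2, ?_⟩
    nlinarith [mul_nonneg (sub_nonneg.mpr hxx')
      (by linarith : (0:ℤ) ≤ a * gfun a b₁ b₂ c d₂p x + b₁)]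
  have hgd2 : ∀ x : ℤ, d₂p ≤ gfun a b₁ b₂ c d₂p x := fun x => le_max_left _ _
  have hMge : d₁p ≤ M := le_max_left _ _
  have hMiff : ∀ x : ℤ, d₁p ≤ x → (M ≤ x ↔ gfun a b₁ b₂ c d₂p x ≤ d₂p) := by
    intro x hx
    rw [hM, gfun_le a b₂ b₁ c d₁p d₂p x hb₂pos, hg x d₂p hx]
    constructor
    · rintro ⟨-, h⟩; exact ⟨hd₂pos, hb₂pos, by linarith⟩
    · rintro ⟨-, -, h⟩; exact ⟨hx, by linarith⟩
  have hC' : ∀ p : ℤ × ℤ, p ∈ Cset ↔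
      ∃ d : ℤ, d₁p ≤ d ∧ d ≤ M ∧ p = (d, gfun a b₁ b₂ c d₂p d) := by
    intro p
    rw [hC]; simp only [Set.mem_setOf_eq]
    constructor
    · rintro ⟨d, h0, h1, h2, h3⟩; exact ⟨d, h1, h2, h3⟩
    · rintro ⟨d, h1, h2, h3⟩; exact ⟨d, ((hAx d).mp h1).1, h1, h2, h3⟩
  ext p
  obtain ⟨x, y⟩ := p
  simp only [Set.mem_setOf_eq, Set.mem_sep_iff]
  constructor
  · rintro ⟨hpD, hmin⟩
    obtain ⟨hx, hy⟩ := (hD' x y).mp hpD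
    have hyg : gfun a b₁ b₂ c d₂p x = y := by
      have h := hmin (x, gfun a b₁ b₂ c d₂p x) ((hD' _ _).mpr ⟨hx, le_rfl⟩)
        (Prod.mk_le_mk.mpr ⟨le_rfl, hy⟩)
      exact congrArg Prod.snd h
    have hxM : x ≤ M := by
      by_contra hcon
      push_neg at hcon
      have hgx : gfun a b₁ b₂ c d₂p x ≤ d₂p := (hMiff x hx).mp hcon.le
      have hqD : (M, d₂p) ∈ Dset := (hD' _ _).mpr ⟨hMge, (hMiff _ hMge).mp le_rfl⟩
      have hle : (M, d₂p) ≤ (x, y) := Prod.mk_le_mk.mpr ⟨hcon.le, (hgd2 x).trans hy⟩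
      have h := hmin (M, d₂p) hqD hle
      have : M = x := congrArg Prod.fst h
      omega
    refine ⟨(hC' (x, y)).mpr ⟨x, hx, hxM, by rw [hyg]⟩, ?_⟩
    intro q hqC hqp
    obtain ⟨d, hd1, hd2, rfl⟩ := (hC' q).mp hqC
    exact hmin _ ((hD' _ _).mpr ⟨hd1, le_rfl⟩) hqp
  · rintro ⟨hpC, hmin⟩
    obtain ⟨d, hd1, hdM, hpe⟩ := (hC' (x, y)).mp hpC
    rw [Prod.mk.injEq] at hpe
    obtain ⟨rfl, rfl⟩ := hpe
    refine ⟨(hD' _ _).mpr ⟨hd1, le_rfl⟩, ?_⟩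
    rintro ⟨u, v⟩ hqD hqp
    obtain ⟨hu, hv⟩ := (hD' u v).mp hqD
    rw [Prod.mk_le_mk] at hqp
    obtain ⟨hud, hvg⟩ := hqp
    have hqC : (u, gfun a b₁ b₂ c d₂p u) ∈ Cset :=
      (hC' _).mpr ⟨u, hu, hud.trans hdM, rfl⟩
    have h := hmin _ hqC (Prod.mk_le_mk.mpr ⟨hud, hv.trans hvg⟩)
    have h1 : u = x := congrArg Prod.fst h
    have h2 : gfun a b₁ b₂ c d₂p u = gfun a b₁ b₂ c d₂p x := congrArg Prod.snd h
    rw [Prod.mk.injEq]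
    exact ⟨h1, le_antisymm hvg (h2 ▸ hv)⟩
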